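/- Almost sure convergence of inverse-probability weights under Poisson sampling: under C_1 ≤ N π_{N,i}/n_0 ≤ C_2 for all i and n_0 ≍ N^α with α ∈ (1/2,1], one has N^{-1} Σ_{i=1}^N (π_{N,i}^{-1} I_{N,i} − 1) → 0 almost surely as N → ∞, where for each N the I_{N,i} are independent Bernoulli(π_{N,i}) and independent across N. -/

import Mathlib

open MeasureTheory ProbabilityTheory Filter

lemma iIndepFun_precomp {Ω ι κ β : Type*} [MeasurableSpace Ω] {μ : Measure Ω}
    [mβ : MeasurableSpace β] {f : ι → Ω → β}
    (h : iIndepFun f μ) (g : κ → ι) (hg : Function.Injective g) :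
    iIndepFun (fun k => f (g k)) μ := by
  classical
  rw [iIndepFun_iff_measure_inter_preimage_eq_mul] at h ⊢
  intro S sets hsets
  set sets' : ι → Set β := fun i =>
    if h : ∃ k, k ∈ S ∧ g k = i then sets h.choose else Set.univ with hs'
  have key : ∀ k ∈ S, sets' (g k) = sets k := by
    intro k hk
    have he : ∃ k', k' ∈ S ∧ g k' = g k := ⟨k, hk, rfl⟩
    simp only [sets', dif_pos he]
    rw [hg he.choose_spec.2]
  have h2 := h (S.image g) (sets := sets') (fun i hi => by
    obtain ⟨k, hk, rfl⟩ := Finset.mem_image.mp hi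
    rw [key k hk]; exact hsets k hk)
  have e1 : (⋂ i ∈ S.image g, f i ⁻¹' sets' i) = ⋂ k ∈ S, f (g k) ⁻¹' sets k := by
    ext ω
    simp only [Set.mem_iInter, Finset.mem_image]
    constructor
    · intro hh k hk
      have := hh (g k) ⟨k, hk, rfl⟩
      rwa [key k hk] at this
    · rintro hh i ⟨k, hk, rfl⟩
      rw [key k hk]; exact hh k hk
  have e2 : (∏ i ∈ S.image g, μ (f i ⁻¹' sets' i)) = ∏ k ∈ S, μ (f (g k) ⁻¹' sets k) := by
    rw [Finset.prod_image (fun x _ y _ hxy => hg hxy)]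
    exact Finset.prod_congr rfl fun k hk => by rw [key k hk]
  rw [e1, e2] at h2
  exact h2


lemma integrable_of_abs_le {Ω : Type*} [MeasureSpace Ω] [IsProbabilityMeasure (ℙ : Measure Ω)]
    {f : Ω → ℝ} (hf : Measurable f) {C : ℝ} (h : ∀ ω, |f ω| ≤ C) :
    Integrable f ℙ :=
  ⟨hf.aestronglyMeasurable, HasFiniteIntegral.of_bounded
    (C := C) (ae_of_all _ (by simpa [Real.norm_eq_abs] using h))⟩

lemma fourth_moment_bound {Ω ι : Type*} [MeasureSpace Ω] [IsProbabilityMeasure (ℙ : Measure Ω)]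
    (Y : ι → Ω → ℝ) (B : ι → ℝ) (hY : ∀ i, Measurable (Y i)) (hB : ∀ i ω, |Y i ω| ≤ B i)
    (h0 : ∀ i, (∫ ω, Y i ω) = 0)
    (hind : iIndepFun Y ℙ) (s : Finset ι) :
    ((∫ ω, (∑ i ∈ s, Y i ω)^2) = ∑ i ∈ s, ∫ ω, (Y i ω)^2) ∧
    ((∫ ω, (∑ i ∈ s, Y i ω)^4) ≤ (∑ i ∈ s, ∫ ω, (Y i ω)^4)
        + 3 * (∑ i ∈ s, ∫ ω, (Y i ω)^2)^2) := by
  classical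
  induction s using Finset.induction_on with
  | empty => simp
  | @insert a s ha IH =>
    have hSmeas : Measurable (fun ω => ∑ i ∈ s, Y i ω) :=
      Finset.measurable_sum s fun i _ => hY i
    have hSbd : ∀ ω, |∑ i ∈ s, Y i ω| ≤ ∑ i ∈ s, |B i| := fun ω =>
      (Finset.abs_sum_le_sum_abs _ _).trans
        (Finset.sum_le_sum fun i _ => (hB i ω).trans (le_abs_self _))
    have hint : ∀ j k : ℕ, Integrable (fun ω => (∑ i ∈ s, Y i ω)^j * (Y a ω)^k) ℙ := by
      intro j k
      apply integrable_of_abs_le (C := (abs (∑ i ∈ s, |B i|))^j * (abs (B a))^k)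
        ((hSmeas.pow_const j).mul ((hY a).pow_const k))
      intro ω
      simp only [Pi.mul_apply]
      rw [abs_mul, abs_pow, abs_pow]
      have h1 : |∑ i ∈ s, Y i ω|^j ≤ (abs (∑ i ∈ s, |B i|))^j :=
        pow_le_pow_left₀ (abs_nonneg _) ((hSbd ω).trans (le_abs_self _)) j
      have h2 : |Y a ω|^k ≤ (abs (B a))^k :=
        pow_le_pow_left₀ (abs_nonneg _) ((hB a ω).trans (le_abs_self _)) k
      exact mul_le_mul h1 h2 (by positivity) (by positivity)
    have hintS : ∀ j : ℕ, Integrable (fun ω => (∑ i ∈ s, Y i ω)^j) ℙ := by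
      intro j; simpa using hint j 0
    have hintY : ∀ k : ℕ, Integrable (fun ω => (Y a ω)^k) ℙ := by
      intro k; simpa using hint 0 k
    have hSYind : IndepFun (fun ω => ∑ i ∈ s, Y i ω) (Y a) ℙ := by
      have := hind.indepFun_finsetSum_of_notMem hY ha
      have he : (∑ j ∈ s, Y j) = fun ω => ∑ i ∈ s, Y i ω := by
        ext ω; simp [Finset.sum_apply]
      rwa [he] at this
    have hprod : ∀ j k : ℕ,
        (∫ ω, (∑ i ∈ s, Y i ω)^j * (Y a ω)^k)
          = (∫ ω, (∑ i ∈ s, Y i ω)^j) * ∫ ω, (Y a ω)^k := fun j k =>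
      IndepFun.integral_fun_mul_eq_mul_integral (hSYind.comp (measurable_id.pow_const j)
        (measurable_id.pow_const k)) (hintS j).aestronglyMeasurable (hintY k).aestronglyMeasurable
    have hES : (∫ ω, ∑ i ∈ s, Y i ω) = 0 := by
      rw [integral_finset_sum s (fun i _ => integrable_of_abs_le (hY i) (hB i))]
      simp [h0]
    have hEY : (∫ ω, Y a ω) = 0 := h0 a
    have i11 : Integrable (fun ω => (∑ i ∈ s, Y i ω) * Y a ω) ℙ := by simpa using hint 1 1
    have i31 : Integrable (fun ω => (∑ i ∈ s, Y i ω)^3 * Y a ω) ℙ := by simpa using hint 3 1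
    have i13 : Integrable (fun ω => (∑ i ∈ s, Y i ω) * (Y a ω)^3) ℙ := by simpa using hint 1 3
    have p11 : (∫ ω, (∑ i ∈ s, Y i ω) * Y a ω) = 0 := by
      have := hprod 1 1; simp only [pow_one] at this; rw [this, hES, zero_mul]
    have p31 : (∫ ω, (∑ i ∈ s, Y i ω)^3 * Y a ω) = 0 := by
      have := hprod 3 1; simp only [pow_one] at this; rw [this, hEY, mul_zero]
    have p13 : (∫ ω, (∑ i ∈ s, Y i ω) * (Y a ω)^3) = 0 := by
      have := hprod 1 3; simp only [pow_one] at this; rw [this, hES, zero_mul]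
    have j3 : Integrable (fun ω => 4 * ((∑ i ∈ s, Y i ω) * (Y a ω)^3) + (Y a ω)^4) ℙ :=
      (i13.const_mul 4).add (hintY 4)
    have j2 : Integrable (fun ω => 6 * ((∑ i ∈ s, Y i ω)^2 * (Y a ω)^2)
        + (4 * ((∑ i ∈ s, Y i ω) * (Y a ω)^3) + (Y a ω)^4)) ℙ :=
      ((hint 2 2).const_mul 6).add j3
    have j1 : Integrable (fun ω => 4 * ((∑ i ∈ s, Y i ω)^3 * Y a ω)
        + (6 * ((∑ i ∈ s, Y i ω)^2 * (Y a ω)^2)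
        + (4 * ((∑ i ∈ s, Y i ω) * (Y a ω)^3) + (Y a ω)^4))) ℙ :=
      (i31.const_mul 4).add j2
    have j0 : Integrable (fun ω => 2 * ((∑ i ∈ s, Y i ω) * Y a ω) + (Y a ω)^2) ℙ :=
      (i11.const_mul 2).add (hintY 2)
    -- second moment
    have h2 : (∫ ω, (∑ i ∈ s, Y i ω + Y a ω)^2)
        = (∫ ω, (∑ i ∈ s, Y i ω)^2) + ∫ ω, (Y a ω)^2 := by
      calc (∫ ω, (∑ i ∈ s, Y i ω + Y a ω)^2)
          = ∫ ω, ((∑ i ∈ s, Y i ω)^2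
              + (2 * ((∑ i ∈ s, Y i ω) * Y a ω) + (Y a ω)^2)) := by
            congr 1; ext ω; ring
        _ = (∫ ω, (∑ i ∈ s, Y i ω)^2)
              + ∫ ω, (2 * ((∑ i ∈ s, Y i ω) * Y a ω) + (Y a ω)^2) :=
            integral_add (hintS 2) j0
        _ = (∫ ω, (∑ i ∈ s, Y i ω)^2)
              + ((∫ ω, 2 * ((∑ i ∈ s, Y i ω) * Y a ω)) + ∫ ω, (Y a ω)^2) := by
            rw [integral_add (i11.const_mul 2) (hintY 2)]
        _ = (∫ ω, (∑ i ∈ s, Y i ω)^2) + ∫ ω, (Y a ω)^2 := by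
            rw [integral_const_mul, p11]; ring
    -- fourth moment
    have h4 : (∫ ω, (∑ i ∈ s, Y i ω + Y a ω)^4)
        = (∫ ω, (∑ i ∈ s, Y i ω)^4)
          + 6 * ((∫ ω, (∑ i ∈ s, Y i ω)^2) * ∫ ω, (Y a ω)^2) + ∫ ω, (Y a ω)^4 := by
      calc (∫ ω, (∑ i ∈ s, Y i ω + Y a ω)^4)
          = ∫ ω, ((∑ i ∈ s, Y i ω)^4
              + (4 * ((∑ i ∈ s, Y i ω)^3 * Y a ω)
              + (6 * ((∑ i ∈ s, Y i ω)^2 * (Y a ω)^2)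
              + (4 * ((∑ i ∈ s, Y i ω) * (Y a ω)^3) + (Y a ω)^4)))) := by
            congr 1; ext ω; ring
        _ = (∫ ω, (∑ i ∈ s, Y i ω)^4)
              + ∫ ω, (4 * ((∑ i ∈ s, Y i ω)^3 * Y a ω)
              + (6 * ((∑ i ∈ s, Y i ω)^2 * (Y a ω)^2)
              + (4 * ((∑ i ∈ s, Y i ω) * (Y a ω)^3) + (Y a ω)^4))) :=
            integral_add (hintS 4) j1
        _ = (∫ ω, (∑ i ∈ s, Y i ω)^4)
              + ((∫ ω, 4 * ((∑ i ∈ s, Y i ω)^3 * Y a ω))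
              + ((∫ ω, 6 * ((∑ i ∈ s, Y i ω)^2 * (Y a ω)^2))
              + ((∫ ω, 4 * ((∑ i ∈ s, Y i ω) * (Y a ω)^3)) + ∫ ω, (Y a ω)^4))) := by
            rw [integral_add (i31.const_mul 4) j2,
              integral_add ((hint 2 2).const_mul 6) j3,
              integral_add (i13.const_mul 4) (hintY 4)]
        _ = (∫ ω, (∑ i ∈ s, Y i ω)^4)
              + 6 * ((∫ ω, (∑ i ∈ s, Y i ω)^2) * ∫ ω, (Y a ω)^2) + ∫ ω, (Y a ω)^4 := by
            rw [integral_const_mul, integral_const_mul, integral_const_mul,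
              p31, p13, hprod 2 2]
            ring
    have hsum : ∀ ω, (∑ i ∈ insert a s, Y i ω) = ∑ i ∈ s, Y i ω + Y a ω := by
      intro ω; rw [Finset.sum_insert ha]; ring
    simp_rw [hsum]
    simp only [Finset.sum_insert ha]
    constructor
    · rw [h2, IH.1]; ring
    · rw [h4, IH.1]
      have hA : (0:ℝ) ≤ ∑ i ∈ s, ∫ ω, (Y i ω)^2 :=
        Finset.sum_nonneg fun i _ => integral_nonneg fun ω => sq_nonneg _
      have hb : (0:ℝ) ≤ ∫ ω, (Y a ω)^2 := integral_nonneg fun ω => sq_nonneg _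
      nlinarith [IH.2, hA, hb]

/-- Almost sure convergence of inverse-probability weights under Poisson
sampling: if `C₁ ≤ N π_{N,i} / n₀ ≤ C₂` for all `i` and `n₀ ≍ N^α` with
`α ∈ (1/2, 1]`, then `N⁻¹ ∑ i, (π_{N,i}⁻¹ I_{N,i} - 1) → 0` almost surely,
where for each `N` the `I_{N,i}` are independent Bernoulli(`π_{N,i}`)
indicators, independently across `N`. -/
theorem poisson_inverse_probability_weights_as_convergence
    {Ω : Type*} [MeasureSpace Ω] [IsProbabilityMeasure (ℙ : Measure Ω)]
    (π : (N : ℕ) → Fin N → ℝ) (I : (N : ℕ) → Fin N → Ω → ℝ)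
    (hπ : ∀ N i, π N i ∈ Set.Ioo (0 : ℝ) 1)
    (hmeas : ∀ N i, Measurable (I N i))
    (h01 : ∀ N i ω, I N i ω = 0 ∨ I N i ω = 1)
    (hmean : ∀ N i, ∫ ω, I N i ω = π N i)
    (hindep : iIndepFun
      (fun p : (Σ N : ℕ, Fin N) => I p.1 p.2) ℙ)
    (n₀ : ℕ → ℝ) (hn₀ : ∀ N, n₀ N = ∑ i, π N i)
    (α : ℝ) (hα : α ∈ Set.Ioc (1 / 2 : ℝ) 1)
    (c₁ c₂ : ℝ) (hc₁ : 0 < c₁)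
    (hasymp : ∀ N : ℕ, 1 ≤ N → c₁ * (N : ℝ) ^ α ≤ n₀ N ∧ n₀ N ≤ c₂ * (N : ℝ) ^ α)
    (C₁ C₂ : ℝ) (hC₁ : 0 < C₁) (hC₁₂ : C₁ ≤ C₂)
    (hbound : ∀ N : ℕ, 1 ≤ N → ∀ i,
      C₁ ≤ (N : ℝ) * π N i / n₀ N ∧ (N : ℝ) * π N i / n₀ N ≤ C₂) :
    ∀ᵐ ω ∂(ℙ : Measure Ω),
      Tendsto (fun N : ℕ => (N : ℝ)⁻¹ * ∑ i, ((π N i)⁻¹ * I N i ω - 1))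
        atTop (nhds 0) := by
  obtain ⟨hα1, hα2⟩ := hα
  set S : ℕ → Ω → ℝ := fun N ω => (N : ℝ)⁻¹ * ∑ i, ((π N i)⁻¹ * I N i ω - 1) with hSdef
  set Y : (N : ℕ) → Fin N → Ω → ℝ := fun N i ω => (π N i)⁻¹ * I N i ω - 1 with hYdef
  have hπpos : ∀ N i, 0 < π N i := fun N i => (hπ N i).1
  have hπlt : ∀ N i, π N i < 1 := fun N i => (hπ N i).2
  have hπinv1 : ∀ N i, 1 ≤ (π N i)⁻¹ := fun N i =>
    (one_le_inv₀ (hπpos N i)).mpr (hπlt N i).le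
  have hYmeas : ∀ N i, Measurable (Y N i) := fun N i =>
    ((hmeas N i).const_mul _).sub measurable_const
  have hYbd : ∀ N i ω, |Y N i ω| ≤ (π N i)⁻¹ := by
    intro N i ω
    rcases h01 N i ω with h | h <;> simp only [hYdef, h]
    · rw [mul_zero, zero_sub, abs_neg, abs_one]; exact hπinv1 N i
    · rw [mul_one, abs_of_nonneg (by linarith [hπinv1 N i])]
      linarith
  have hIint : ∀ N i, Integrable (I N i) ℙ := fun N i =>
    integrable_of_abs_le (hmeas N i) (C := 1) (fun ω => by
      rcases h01 N i ω with h | h <;> simp [h])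
  have hYint : ∀ N i, Integrable (Y N i) ℙ := fun N i =>
    integrable_of_abs_le (hYmeas N i) (hYbd N i)
  have hY0 : ∀ N i, (∫ ω, Y N i ω) = 0 := by
    intro N i
    simp only [hYdef]
    rw [integral_sub ((hIint N i).const_mul _) (integrable_const 1),
      integral_const_mul, hmean, integral_const]
    simp [inv_mul_cancel₀ (hπpos N i).ne']
  have hY2 : ∀ N i, (∫ ω, (Y N i ω)^2) = (π N i)⁻¹ - 1 := by
    intro N i
    have e : ∀ ω, (Y N i ω)^2
        = ((π N i)⁻¹^2 - 2*(π N i)⁻¹) * I N i ω + 1 := by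
      intro ω
      rcases h01 N i ω with h | h <;> simp only [hYdef, h] <;> ring
    simp only [hYdef] at e ⊢
    simp_rw [e]
    rw [integral_add ((hIint N i).const_mul _) (integrable_const 1),
      integral_const_mul, hmean, integral_const]
    simp only [measure_univ, ENNReal.toReal_one, smul_eq_mul, one_mul, probReal_univ]
    have h1 : π N i * (π N i)⁻¹ = 1 := mul_inv_cancel₀ (hπpos N i).ne'
    linear_combination ((π N i)⁻¹ - 2) * h1
  have hY2nn : ∀ N i, (0:ℝ) ≤ ∫ ω, (Y N i ω)^2 := fun N i =>
    integral_nonneg fun ω => sq_nonneg _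
  have hY4int : ∀ N i, Integrable (fun ω => (Y N i ω)^4) ℙ := fun N i =>
    integrable_of_abs_le ((hYmeas N i).pow_const 4) (C := ((π N i)⁻¹)^4) (fun ω => by
      rw [abs_pow]
      exact pow_le_pow_left₀ (abs_nonneg _) (hYbd N i ω) 4)
  have hY4 : ∀ N i, (∫ ω, (Y N i ω)^4) ≤ ((π N i)⁻¹)^4 := by
    intro N i
    have := integral_mono (hY4int N i) (integrable_const (((π N i)⁻¹)^4))
      (fun ω => by
        calc (Y N i ω)^4 ≤ |(Y N i ω)^4| := le_abs_self _
          _ = |Y N i ω|^4 := abs_pow _ _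
          _ ≤ ((π N i)⁻¹)^4 := pow_le_pow_left₀ (abs_nonneg _) (hYbd N i ω) 4)
    simpa using this
  have hYind : ∀ N, iIndepFun (Y N) ℙ := by
    intro N
    have h1 : iIndepFun
        (fun i : Fin N => I N i) ℙ :=
      iIndepFun_precomp hindep (Sigma.mk N) sigma_mk_injective
    have h2 := h1.comp (fun i => fun x : ℝ => (π N i)⁻¹ * x - 1)
      (fun i => (measurable_id.const_mul _).sub measurable_const)
    exact h2
  -- fourth moment of the sum
  have key4 : ∀ N : ℕ,
      ((∫ ω, (∑ i, Y N i ω)^4) ≤ (∑ i, ∫ ω, (Y N i ω)^4)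
        + 3 * (∑ i, ∫ ω, (Y N i ω)^2)^2) :=
    fun N => (fourth_moment_bound (Y N) (fun i => (π N i)⁻¹) (hYmeas N) (hYbd N)
      (hY0 N) (hYind N) Finset.univ).2
  -- constants
  set D : ℝ := (C₁ * c₁)⁻¹ with hDdef
  have hDpos : 0 < D := by positivity
  set K : ℝ := D^4 + 3*D^2 with hKdef
  have hKpos : 0 < K := by positivity
  have hSmeas : ∀ N, Measurable (S N) := fun N =>
    (Finset.measurable_sum Finset.univ (fun i _ => hYmeas N i)).const_mul _
  have hS4int : ∀ N, Integrable (fun ω => (S N ω)^4) ℙ := by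
    intro N
    apply integrable_of_abs_le ((hSmeas N).pow_const 4)
      (C := (|(N:ℝ)⁻¹| * ∑ i, (π N i)⁻¹)^4)
    intro ω
    rw [abs_pow]
    apply pow_le_pow_left₀ (abs_nonneg _) _ 4
    calc |S N ω| = |(N:ℝ)⁻¹| * |∑ i, Y N i ω| := by rw [← abs_mul]
      _ ≤ |(N:ℝ)⁻¹| * ∑ i, (π N i)⁻¹ := by
          apply mul_le_mul_of_nonneg_left _ (abs_nonneg _)
          exact (Finset.abs_sum_le_sum_abs _ _).trans
            (Finset.sum_le_sum fun i _ => hYbd N i ω)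
  -- key fourth-moment bound
  have key : ∀ N : ℕ, 1 ≤ N →
      (∫ ω, (S N ω)^4) ≤ K * ((N:ℝ)^(1-4*α) + (N:ℝ)^(-(2*α))) := by
    intro N hN
    have hNpos : (0:ℝ) < N := by exact_mod_cast hN
    have hn0lb : c₁ * (N:ℝ)^α ≤ n₀ N := (hasymp N hN).1
    have hApos : (0:ℝ) < (N:ℝ)^α := Real.rpow_pos_of_pos hNpos α
    have hn0pos : 0 < n₀ N := lt_of_lt_of_le (by positivity) hn0lb
    set M : ℝ := (N:ℝ) / (C₁ * n₀ N) with hMdef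
    have hMpos : 0 < M := by positivity
    have hπinvub : ∀ i, (π N i)⁻¹ ≤ M := by
      intro i
      have h := (hbound N hN i).1
      have h2 : C₁ * n₀ N ≤ (N:ℝ) * π N i := (le_div_iff₀ hn0pos).mp h
      have hπlb : C₁ * n₀ N / (N:ℝ) ≤ π N i := by
        rw [div_le_iff₀ hNpos]
        linarith [mul_comm (N:ℝ) (π N i)]
      have h0 : 0 < C₁ * n₀ N / (N:ℝ) := by positivity
      have := one_div_le_one_div_of_le h0 hπlb
      rw [one_div, one_div, inv_div] at this
      exact this.trans_eq (by rw [hMdef])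
    have hsum4 : (∑ i, ∫ ω, (Y N i ω)^4) ≤ (N:ℝ) * M^4 := by
      calc (∑ i, ∫ ω, (Y N i ω)^4) ≤ ∑ _i : Fin N, M^4 :=
          Finset.sum_le_sum fun i _ => (hY4 N i).trans
            (pow_le_pow_left₀ (inv_pos.mpr (hπpos N i)).le (hπinvub i) 4)
        _ = (N:ℝ) * M^4 := by
          rw [Finset.sum_const, Finset.card_univ, Fintype.card_fin, nsmul_eq_mul]
    have hsum2 : (∑ i, ∫ ω, (Y N i ω)^2) ≤ (N:ℝ) * M := by
      calc (∑ i, ∫ ω, (Y N i ω)^2) ≤ ∑ _i : Fin N, M :=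
          Finset.sum_le_sum fun i _ => by
            rw [hY2 N i]; linarith [hπinvub i]
        _ = (N:ℝ) * M := by
          rw [Finset.sum_const, Finset.card_univ, Fintype.card_fin, nsmul_eq_mul]
    have hsum2nn : (0:ℝ) ≤ ∑ i, ∫ ω, (Y N i ω)^2 :=
      Finset.sum_nonneg fun i _ => hY2nn N i
    have hT4 : (∫ ω, (∑ i, Y N i ω)^4) ≤ (N:ℝ) * M^4 + 3 * ((N:ℝ)*M)^2 := by
      refine (key4 N).trans (add_le_add hsum4 ?_)
      have : (∑ i, ∫ ω, (Y N i ω)^2)^2 ≤ ((N:ℝ)*M)^2 :=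
        pow_le_pow_left₀ hsum2nn hsum2 2
      linarith
    have hS4 : (∫ ω, (S N ω)^4) = ((N:ℝ)⁻¹)^4 * ∫ ω, (∑ i, Y N i ω)^4 := by
      simp only [hSdef, hYdef]
      simp_rw [mul_pow]
      rw [integral_const_mul]
    -- rpow conversions
    have e1 : (N:ℝ)^(1-α) = (N:ℝ) / (N:ℝ)^α := by
      rw [Real.rpow_sub hNpos, Real.rpow_one]
    have e2 : (N:ℝ)^(1-4*α) = (N:ℝ) / ((N:ℝ)^α)^4 := by
      rw [show (1-4*α) = 1 - α*4 by ring, Real.rpow_sub hNpos, Real.rpow_one,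
        Real.rpow_mul hNpos.le, show ((4:ℝ)) = ((4:ℕ):ℝ) by norm_num,
        Real.rpow_natCast]
    have e3 : (N:ℝ)^(-(2*α)) = 1 / ((N:ℝ)^α)^2 := by
      rw [Real.rpow_neg hNpos.le, show (2:ℝ)*α = α*2 by ring, Real.rpow_mul hNpos.le,
        show ((2:ℝ)) = ((2:ℕ):ℝ) by norm_num, Real.rpow_natCast, one_div]
    have hM : M ≤ D * ((N:ℝ) / (N:ℝ)^α) := by
      have h1 : C₁ * (c₁ * (N:ℝ)^α) ≤ C₁ * n₀ N :=
        mul_le_mul_of_nonneg_left hn0lb hC₁.le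
      have h2 : M ≤ (N:ℝ) / (C₁ * (c₁ * (N:ℝ)^α)) := by
        rw [hMdef]
        exact div_le_div_of_nonneg_left hNpos.le (by positivity) h1
      refine h2.trans_eq ?_
      rw [hDdef, show C₁ * (c₁ * (N:ℝ)^α) = (C₁ * c₁) * (N:ℝ)^α by ring,
        ← div_div, div_right_comm, div_eq_mul_inv, mul_comm]
    calc (∫ ω, (S N ω)^4)
        ≤ ((N:ℝ)⁻¹)^4 * ((N:ℝ) * M^4 + 3 * ((N:ℝ)*M)^2) := by
          rw [hS4]
          exact mul_le_mul_of_nonneg_left hT4 (by positivity)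
      _ ≤ ((N:ℝ)⁻¹)^4 * ((N:ℝ) * (D * ((N:ℝ)/(N:ℝ)^α))^4
            + 3 * ((N:ℝ) * (D * ((N:ℝ)/(N:ℝ)^α)))^2) := by
          gcongr
      _ = D^4 * ((N:ℝ) / ((N:ℝ)^α)^4) + 3*D^2 * (1 / ((N:ℝ)^α)^2) := by
          field_simp
      _ ≤ K * ((N:ℝ)^(1-4*α) + (N:ℝ)^(-(2*α))) := by
          rw [e2, e3, hKdef]
          have p1 : (0:ℝ) ≤ (N:ℝ) / ((N:ℝ)^α)^4 := by positivity
          have p2 : (0:ℝ) ≤ 1 / ((N:ℝ)^α)^2 := by positivity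
          nlinarith [hDpos, sq_nonneg D, sq_nonneg (D^2)]
  -- tail estimate and Borel-Cantelli
  have tail : ∀ ε : ℝ, 0 < ε → (∀ᵐ ω ∂(ℙ : Measure Ω), ∀ᶠ N in atTop, |S N ω| < ε) := by
    intro ε hε
    have hmark : ∀ N : ℕ, ℙ {ω | ε ≤ |S N ω|}
        ≤ ENNReal.ofReal (ε⁻¹^4 * (K * ((N:ℝ)^(1-4*α) + (N:ℝ)^(-(2*α))))) := by
      intro N
      rcases Nat.eq_zero_or_pos N with rfl | hN
      · have hempty : {ω : Ω | ε ≤ |S 0 ω|} = ∅ := by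
          ext ω
          simp [hSdef, not_le, hε]
        rw [hempty]
        simp
      · have hsub : {ω | ε ≤ |S N ω|} ⊆ {ω | ε^4 ≤ (S N ω)^4} := by
          intro ω hω
          simp only [Set.mem_setOf_eq] at *
          calc ε^4 ≤ |S N ω|^4 := pow_le_pow_left₀ hε.le hω 4
            _ = (S N ω)^4 := by
              rw [← abs_pow, abs_of_nonneg (by positivity)]
        have hmar := mul_meas_ge_le_integral_of_nonneg (μ := ℙ)
          (ae_of_all _ (fun ω => by positivity : ∀ ω, (0:ℝ) ≤ (S N ω)^4))
          (hS4int N) (ε^4)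
        rw [measureReal_def] at hmar
        have hε4 : (0:ℝ) < ε^4 := by positivity
        have m1 : (ℙ {ω | ε ≤ |S N ω|}).toReal ≤ (ℙ {ω | ε^4 ≤ (S N ω)^4}).toReal :=
          ENNReal.toReal_mono (measure_ne_top _ _) (measure_mono hsub)
        have m2 : (ℙ {ω | ε^4 ≤ (S N ω)^4}).toReal ≤ ε⁻¹^4 * ∫ ω, (S N ω)^4 := by
          rw [inv_pow, ← div_eq_inv_mul, le_div_iff₀ hε4]
          linarith [hmar, mul_comm (ε^4) ((ℙ {ω | ε^4 ≤ (S N ω)^4}).toReal)]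
        have m3 : ε⁻¹^4 * (∫ ω, (S N ω)^4)
            ≤ ε⁻¹^4 * (K * ((N:ℝ)^(1-4*α) + (N:ℝ)^(-(2*α)))) :=
          mul_le_mul_of_nonneg_left (key N hN) (by positivity)
        calc ℙ {ω | ε ≤ |S N ω|}
            = ENNReal.ofReal ((ℙ {ω | ε ≤ |S N ω|}).toReal) :=
              (ENNReal.ofReal_toReal (measure_ne_top _ _)).symm
          _ ≤ ENNReal.ofReal (ε⁻¹^4 * (K * ((N:ℝ)^(1-4*α) + (N:ℝ)^(-(2*α))))) :=
              ENNReal.ofReal_le_ofReal (m1.trans (m2.trans m3))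
    have hnonneg : ∀ N : ℕ, (0:ℝ) ≤ ε⁻¹^4 * (K * ((N:ℝ)^(1-4*α) + (N:ℝ)^(-(2*α)))) := by
      intro N
      have r1 : (0:ℝ) ≤ (N:ℝ)^(1-4*α) := Real.rpow_nonneg (Nat.cast_nonneg N) _
      have r2 : (0:ℝ) ≤ (N:ℝ)^(-(2*α)) := Real.rpow_nonneg (Nat.cast_nonneg N) _
      positivity
    have hsummable : Summable
        (fun N : ℕ => ε⁻¹^4 * (K * ((N:ℝ)^(1-4*α) + (N:ℝ)^(-(2*α))))) := by
      apply Summable.mul_left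
      apply Summable.mul_left
      exact (Real.summable_nat_rpow.mpr (by linarith)).add
        (Real.summable_nat_rpow.mpr (by linarith))
    have htsum : (∑' N : ℕ, ℙ {ω | ε ≤ |S N ω|}) ≠ ⊤ := by
      refine ne_top_of_le_ne_top ?_ (ENNReal.tsum_le_tsum hmark)
      rw [← ENNReal.ofReal_tsum_of_nonneg hnonneg hsummable]
      exact ENNReal.ofReal_ne_top
    have hBC := measure_setOf_frequently_eq_zero
      (μ := (ℙ : Measure Ω)) (p := fun N ω => ε ≤ |S N ω|) htsum
    have hae : ∀ᵐ ω ∂(ℙ : Measure Ω), ¬ ∃ᶠ N in atTop, ε ≤ |S N ω| := by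
      rw [ae_iff]
      simpa only [not_not] using hBC
    filter_upwards [hae] with ω hω
    have := Filter.not_frequently.mp hω
    filter_upwards [this] with N hN
    exact not_le.mp hN
  have hae : ∀ᵐ ω ∂(ℙ : Measure Ω), ∀ k : ℕ, ∀ᶠ N in atTop, |S N ω| < ((k:ℝ)+1)⁻¹ :=
    ae_all_iff.mpr fun k => tail _ (by positivity)
  filter_upwards [hae] with ω hω
  rw [Metric.tendsto_atTop]
  intro ε hε
  obtain ⟨k, hk⟩ := exists_nat_one_div_lt hε
  obtain ⟨N₀, hN₀⟩ := eventually_atTop.mp (hω k)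
  refine ⟨N₀, fun n hn => ?_⟩
  rw [Real.dist_eq, sub_zero]
  calc |S n ω| < ((k:ℝ)+1)⁻¹ := hN₀ n hn
    _ = 1/((k:ℝ)+1) := (one_div _).symm
    _ < ε := hk
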